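/- Let $\tilde{n}_0 \le \tilde{n}_1 \le \tilde{n}_2 \le \cdots \le \tilde{n}_N$ be positive integers with $N \ge 2$. Then $c_i^{(N)} = c_i^{(1)}$ for all $i \in \{1,\ldots,\tilde{n}_0\}$ (where $c_i^{(m)} = 1 - i + \min_{j \le m} \lfloor (\sum_{l=0}^{j} \tilde{n}_l - i)/j \rfloor$) if and only if $\tilde{n}_2 + 1 \ge \tilde{n}_0 + \tilde{n}_1$. -/

import Mathlib

/-- A Rayleigh product channel reduces to an ordinary `ñ₀ × ñ₁` Rayleigh
channel (`c^(N) = c^(1)` on `1 ≤ i ≤ ñ₀`) if and only if `ñ₂ + 1 ≥ ñ₀ + ñ₁`. -/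
theorem rp_reduction_to_rayleigh (N : ℕ) (hN : 2 ≤ N) (n : ℕ → ℤ)
    (hpos : ∀ l, l ≤ N → 0 < n l)
    (hmono : ∀ l, l < N → n l ≤ n (l + 1)) :
    (∀ i : ℤ, 1 ≤ i → i ≤ n 0 →
        (1 - i + (Finset.Icc 1 N).inf' (Finset.nonempty_Icc.mpr (by omega))
            (fun j => Int.fdiv ((∑ l ∈ Finset.range (j + 1), n l) - i) (j : ℤ)))
          = (1 - i + (Finset.Icc 1 1).inf' (Finset.nonempty_Icc.mpr le_rfl)
            (fun j => Int.fdiv ((∑ l ∈ Finset.range (j + 1), n l) - i) (j : ℤ))))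
      ↔ n 2 + 1 ≥ n 0 + n 1 := by
  have hmono' : ∀ b, b ≤ N → ∀ a, a ≤ b → n a ≤ n b := by
    intro b
    induction b with
    | zero =>
      intro _ a ha
      have ha' : a = 0 := by omega
      subst ha'
      exact le_rfl
    | succ k ih =>
      intro hk a ha
      rcases Nat.lt_succ_iff_lt_or_eq.mp (Nat.lt_succ_of_le ha) with h | h
      · exact le_trans (ih (by omega) a (by omega)) (hmono k (by omega))
      · subst h; exact le_rfl
  have hS1 : ∀ i : ℤ, (∑ l ∈ Finset.range (1 + 1), n l) - i = n 0 + n 1 - i := by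
    intro i
    rw [Finset.sum_range_succ, Finset.sum_range_one]
  have hrhs : ∀ i : ℤ, (Finset.Icc 1 1).inf' (Finset.nonempty_Icc.mpr le_rfl)
      (fun j => Int.fdiv ((∑ l ∈ Finset.range (j + 1), n l) - i) (j : ℤ)) = n 0 + n 1 - i := by
    intro i
    simp only [Finset.Icc_self, Finset.inf'_singleton, Nat.cast_one, Int.fdiv_one]
    exact hS1 i
  constructor
  · intro H
    have h1 : (1 : ℤ) ≤ n 0 := hpos 0 (by omega)
    have h := H 1 le_rfl h1
    rw [hrhs 1] at h
    have heq : (Finset.Icc 1 N).inf' (Finset.nonempty_Icc.mpr (by omega))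
        (fun j => Int.fdiv ((∑ l ∈ Finset.range (j + 1), n l) - 1) (j : ℤ)) = n 0 + n 1 - 1 := by
      omega
    have h2 : (2 : ℕ) ∈ Finset.Icc 1 N := Finset.mem_Icc.mpr ⟨by omega, hN⟩
    have hle := Finset.inf'_le
      (fun j => Int.fdiv ((∑ l ∈ Finset.range (j + 1), n l) - 1) (j : ℤ)) h2
    rw [heq] at hle
    have hS2 : (∑ l ∈ Finset.range (2 + 1), n l) = n 0 + n 1 + n 2 := by
      rw [Finset.sum_range_succ, Finset.sum_range_succ, Finset.sum_range_one]
    rw [hS2, Int.fdiv_eq_ediv_of_nonneg _ (by norm_num : (0:ℤ) ≤ (2:ℕ))] at hle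
    rw [Int.le_ediv_iff_mul_le (by norm_num : (0:ℤ) < (2:ℕ))] at hle
    push_cast at hle
    omega
  · intro h i hi1 _
    rw [hrhs i]
    congr 1
    apply le_antisymm
    · have h1 : (1 : ℕ) ∈ Finset.Icc 1 N := Finset.mem_Icc.mpr ⟨le_rfl, by omega⟩
      have := Finset.inf'_le
        (fun j => Int.fdiv ((∑ l ∈ Finset.range (j + 1), n l) - i) (j : ℤ)) h1
      simpa only [hS1 i, Nat.cast_one, Int.fdiv_one] using this
    · apply Finset.le_inf'
      intro j hj
      obtain ⟨hj1, hjN⟩ := Finset.mem_Icc.mp hj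
      have hjpos : (0 : ℤ) < (j : ℤ) := by exact_mod_cast hj1
      rw [Int.fdiv_eq_ediv_of_nonneg _ (le_of_lt hjpos), Int.le_ediv_iff_mul_le hjpos]
      have hsplit : (∑ l ∈ Finset.range (j + 1), n l)
          = (∑ l ∈ Finset.range 2, n l) + ∑ l ∈ Finset.Ico 2 (j + 1), n l := by
        rw [Finset.range_eq_Ico, Finset.range_eq_Ico]
        exact (Finset.sum_Ico_consecutive n (by omega) (by omega)).symm
      have hcard : (Finset.Ico 2 (j + 1)).card = j - 1 := by
        rw [Nat.card_Ico]; omega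
      have hbound : ((j : ℤ) - 1) * (n 0 + n 1 - i) ≤ ∑ l ∈ Finset.Ico 2 (j + 1), n l := by
        have := Finset.card_nsmul_le_sum (Finset.Ico 2 (j + 1)) n (n 0 + n 1 - i) ?_
        · rw [hcard, nsmul_eq_mul] at this
          have hc : ((j - 1 : ℕ) : ℤ) = (j : ℤ) - 1 := by
            have : (1:ℕ) ≤ j := hj1
            push_cast [Nat.cast_sub this]
            ring
          rwa [hc] at this
        · intro l hl
          obtain ⟨hl2, hlj⟩ := Finset.mem_Ico.mp hl
          have h2l : n 2 ≤ n l := hmono' l (by omega) 2 hl2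
          omega
      have h02 : (∑ l ∈ Finset.range 2, n l) = n 0 + n 1 := by
        rw [Finset.sum_range_succ, Finset.sum_range_one]
      rw [hsplit, h02]
      nlinarith [hbound]
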